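/- Let π be a probability measure on (Ω,𝒮₁), r ∈ ℕ, 0 ≤ z ≤ r, and let X = (Δ₁,…,Δ_r), Y = (Λ₁,…,Λ_r) ∈ ℱ_{(pref(ℝ^r),π)} with Δ_j, Λ_j π-integrable for all j, such that Δ₁,…,Δ_r are jointly independent and Λ₁,…,Λ_r are jointly independent. If (I) E_π(Δ_j) ≥ E_π(Λ_j) for all j = 1,…,r and (II) for all j = z+1,…,r, E_π(u∘Δ_j) ≥ E_π(u∘Λ_j) for every bounded nondecreasing measurable u : ℝ → ℝ, then (X,Y) ∈ R_{(pref(ℝ^r),π)}. -/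

import Mathlib

open MeasureTheory
open scoped BigOperators

namespace GSD

/-- The strict part `P_R` of a binary relation `R`. -/
def strictPart {α : Type*} (R : α → α → Prop) (a b : α) : Prop := R a b ∧ ¬ R b a

/-- The indifference part `I_R` of a binary relation `R`. -/
def indiffPart {α : Type*} (R : α → α → Prop) (a b : α) : Prop := R a b ∧ R b a

/-- `[A, R1, R2]` is a preference system: `R1` is a preorder on `A` and `R2` is a preorder
on `R1` (i.e. a reflexive-transitive relation supported on pairs belonging to `R1`). -/
structure IsPrefSystem {A : Type*} (R1 : A → A → Prop) (R2 : A × A → A × A → Prop) : Prop where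
  refl1 : ∀ a, R1 a a
  trans1 : ∀ a b c, R1 a b → R1 b c → R1 a c
  sub2 : ∀ p q, R2 p q → R1 p.1 p.2 ∧ R1 q.1 q.2
  refl2 : ∀ p, R1 p.1 p.2 → R2 p p
  trans2 : ∀ p q r, R2 p q → R2 q r → R2 p r

/-- `u` is a representation of the preference system `[A, R1, R2]`. -/
def IsRepresentation {A : Type*} (R1 : A → A → Prop) (R2 : A × A → A × A → Prop)
    (u : A → ℝ) : Prop :=
  (∀ a b, R1 a b → (u b ≤ u a ∧ (u a = u b ↔ R1 b a))) ∧
  (∀ a b c d, R2 (a, b) (c, d) →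
    (u c - u d ≤ u a - u b ∧ (u a - u b = u c - u d ↔ R2 (c, d) (a, b))))

/-- A preference system is consistent if it admits a representation. -/
def Consistent {A : Type*} (R1 : A → A → Prop) (R2 : A × A → A × A → Prop) : Prop :=
  ∃ u, IsRepresentation R1 R2 u

/-- The preference system is bounded with minimal element `a0` and maximal element `a1`. -/
def Bounded {A : Type*} (R1 : A → A → Prop) (a0 a1 : A) : Prop :=
  (∀ a, R1 a1 a) ∧ (∀ a, R1 a a0) ∧ strictPart R1 a1 a0

/-- Membership in the normalized representation set `𝒩_𝒜`. -/
def NormRep {A : Type*} (R1 : A → A → Prop) (R2 : A × A → A × A → Prop) (a0 a1 : A)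
    (u : A → ℝ) : Prop :=
  IsRepresentation R1 R2 u ∧ u a0 = 0 ∧ u a1 = 1

/-- Membership in `𝒩^δ_𝒜`: normalized representations separating strict pairs by at least `δ`. -/
def NormRepDelta {A : Type*} (R1 : A → A → Prop) (R2 : A × A → A × A → Prop) (a0 a1 : A)
    (δ : ℝ) (u : A → ℝ) : Prop :=
  NormRep R1 R2 a0 a1 u ∧
  (∀ a b, strictPart R1 a b → δ ≤ u a - u b) ∧
  (∀ c d e f, strictPart R2 (c, d) (e, f) → δ ≤ u c - u d - u e + u f)

/-- Membership in `ℱ_{(𝒜,π)}`: all representation-composites are integrable. -/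
def memF {Ω A : Type*} [MeasurableSpace Ω] (π : Measure Ω)
    (R1 : A → A → Prop) (R2 : A × A → A × A → Prop) (X : Ω → A) : Prop :=
  ∀ u, IsRepresentation R1 R2 u → Integrable (fun ω => u (X ω)) π

/-- The generalized stochastic dominance (GSD) relation `R_{(𝒜,π)}`. -/
def GSDrel {Ω A : Type*} [MeasurableSpace Ω] (π : Measure Ω)
    (R1 : A → A → Prop) (R2 : A × A → A × A → Prop) (X Y : Ω → A) : Prop :=
  ∀ u, IsRepresentation R1 R2 u → ∫ ω, u (Y ω) ∂π ≤ ∫ ω, u (X ω) ∂π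

/-- The relation `R₁*` of `pref(ℝ^r)`: componentwise dominance. -/
def R1star (r : ℕ) (x y : Fin r → ℝ) : Prop := ∀ j, y j ≤ x j

/-- The relation `R₂*` of `pref(ℝ^r)` with the first `z` dimensions cardinal and the
remaining ones ordinal. -/
def R2star (r z : ℕ) (p q : (Fin r → ℝ) × (Fin r → ℝ)) : Prop :=
  R1star r p.1 p.2 ∧ R1star r q.1 q.2 ∧
  (∀ j : Fin r, (j : ℕ) < z → q.1 j - q.2 j ≤ p.1 j - p.2 j) ∧
  (∀ j : Fin r, z ≤ (j : ℕ) → p.2 j ≤ q.2 j ∧ q.2 j ≤ q.1 j ∧ q.1 j ≤ p.1 j)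

section Structure

variable {r z : ℕ} {u : (Fin r → ℝ) → ℝ}
variable (hu : IsRepresentation (R1star r) (R2star r z) u)

/-- monotonicity of a representation -/
lemma u_mono (hu : IsRepresentation (R1star r) (R2star r z) u) {x y : Fin r → ℝ}
    (h : y ≤ x) : u y ≤ u x :=
  (hu.1 x y (fun j => h j)).1

/-- equal utility differences from two-sided R2 -/
lemma udiff_eq (hu : IsRepresentation (R1star r) (R2star r z) u) {a b c d : Fin r → ℝ}
    (h1 : R2star r z (a, b) (c, d)) (h2 : R2star r z (c, d) (a, b)) :
    u a - u b = u c - u d :=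
  ((hu.2 a b c d h1).2).mpr h2

/-- additivity across cardinal coordinate shifts -/
lemma shift_eq (hu : IsRepresentation (R1star r) (R2star r z) u) {j : Fin r}
    (hj : (j : ℕ) < z) {w w' : Fin r → ℝ} (hord : ∀ k : Fin r, z ≤ (k : ℕ) → w k = w' k)
    {a b c d : ℝ} (habcd : a - b = c - d) :
    u (Function.update w j a) - u (Function.update w j b)
      = u (Function.update w' j c) - u (Function.update w' j d) := by
  classical
  -- helper for ordered case
  have key : ∀ (w w' : Fin r → ℝ), (∀ k : Fin r, z ≤ (k : ℕ) → w k = w' k) →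
      ∀ (a b c d : ℝ), a - b = c - d → b ≤ a →
      u (Function.update w j a) - u (Function.update w j b)
        = u (Function.update w' j c) - u (Function.update w' j d) := by
    intro w w' hord a b c d habcd hba
    have hdc : d ≤ c := by linarith
    have hR1 : ∀ (v : Fin r → ℝ) (s t : ℝ), t ≤ s →
        R1star r (Function.update v j s) (Function.update v j t) := by
      intro v s t hts k
      rcases eq_or_ne k j with rfl | hk
      · simp [hts]
      · simp [Function.update_of_ne hk]
    have hR2 : R2star r z (Function.update w j a, Function.update w j b)
        (Function.update w' j c, Function.update w' j d) := by
      refine ⟨hR1 w a b hba, hR1 w' c d hdc, ?_, ?_⟩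
      · intro k hk
        rcases eq_or_ne k j with rfl | hkj
        · simp [habcd.ge]
        · simp [Function.update_of_ne hkj]
      · intro k hk
        have hkj : k ≠ j := by
          rintro rfl; omega
        simp [Function.update_of_ne hkj, hord k hk]
    have hR2' : R2star r z (Function.update w' j c, Function.update w' j d)
        (Function.update w j a, Function.update w j b) := by
      refine ⟨hR1 w' c d hdc, hR1 w a b hba, ?_, ?_⟩
      · intro k hk
        rcases eq_or_ne k j with rfl | hkj
        · simp [habcd.le]
        · simp [Function.update_of_ne hkj]
      · intro k hk
        have hkj : k ≠ j := by
          rintro rfl; omega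
        simp [Function.update_of_ne hkj, hord k hk]
    exact udiff_eq hu hR2 hR2'
  rcases le_total b a with hba | hab
  · exact key w w' hord a b c d habcd hba
  · have := key w w' hord b a d c (by linarith) hab
    linarith

/-- differences along ordinal moves do not depend on the common cardinal/ordinal context -/
lemma ord_diff_invariant (hu : IsRepresentation (R1star r) (R2star r z) u)
    {w w' v v' : Fin r → ℝ} (hw : w ≤ w') (hv : v ≤ v')
    (hcard : ∀ k : Fin r, (k : ℕ) < z → w k = w' k)
    (hcard' : ∀ k : Fin r, (k : ℕ) < z → v k = v' k)
    (how : ∀ k : Fin r, z ≤ (k : ℕ) → v k = w k)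
    (how' : ∀ k : Fin r, z ≤ (k : ℕ) → v' k = w' k) :
    u w' - u w = u v' - u v := by
  have hR2 : R2star r z (w', w) (v', v) := by
    refine ⟨fun k => hw k, fun k => hv k, ?_, ?_⟩
    · intro k hk
      dsimp only
      rw [hcard k hk, hcard' k hk]
      simp
    · intro k hk
      dsimp only
      rw [how k hk, how' k hk]
      exact ⟨le_refl _, hw k, le_refl _⟩
  have hR2' : R2star r z (v', v) (w', w) := by
    refine ⟨fun k => hv k, fun k => hw k, ?_, ?_⟩
    · intro k hk
      dsimp only
      rw [hcard k hk, hcard' k hk]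
      simp
    · intro k hk
      dsimp only
      rw [how k hk, how' k hk]
      exact ⟨le_refl _, hw k, le_refl _⟩
  exact udiff_eq hu hR2 hR2'

/-- an additive monotone real function is linear -/
lemma linear_of_additive_monotone (F : ℝ → ℝ) (hadd : ∀ s t, F (s + t) = F s + F t)
    (hmono : Monotone F) : ∀ t, F t = F 1 * t := by
  have h0 : F 0 = 0 := by have := hadd 0 0; simp at this; linarith
  have hQ : ∀ q : ℚ, F (q : ℝ) = F 1 * q := by
    intro q
    let f : ℝ →+ ℝ := AddMonoidHom.mk' F hadd
    have : f ((q : ℝ) • (1 : ℝ)) = (q : ℝ) • f 1 := map_ratCast_smul f ℝ ℝ q 1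
    simpa [f, smul_eq_mul, mul_comm] using this
  have hF1 : 0 ≤ F 1 := by
    have := hmono (show (0:ℝ) ≤ 1 by norm_num); rw [h0] at this; exact this
  intro t
  by_contra hne
  rcases lt_or_gt_of_ne hne with hlt | hgt
  · -- F t < F 1 * t
    rcases eq_or_lt_of_le hF1 with h1 | h1
    · -- F 1 = 0 : then F 1 * t = 0 and F t < 0, but F t ≥ F q = 0 for q ≤ t
      obtain ⟨q, _, hq2⟩ := exists_rat_btwn (show t - 1 < t by linarith)
      have := hmono hq2.le
      rw [hQ q, ← h1] at this
      simp at this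
      rw [← h1] at hlt
      simp at hlt
      linarith
    · -- F 1 > 0
      obtain ⟨q, hq1, hq2⟩ := exists_rat_btwn (show t - (F 1 * t - F t) / F 1 < t by
        have : 0 < (F 1 * t - F t) / F 1 := div_pos (by linarith) h1
        linarith)
      have hmq : F (q : ℝ) ≤ F t := hmono hq2.le
      rw [hQ q] at hmq
      have : F 1 * t - F 1 * q < F 1 * t - F t := by
        have := (mul_lt_mul_iff_right₀ h1).mpr hq1
        rw [mul_sub, mul_div_cancel₀ _ (ne_of_gt h1)] at this
        linarith
      linarith
  · -- F 1 * t < F t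
    rcases eq_or_lt_of_le hF1 with h1 | h1
    · obtain ⟨q, hq1, _⟩ := exists_rat_btwn (show t < t + 1 by linarith)
      have := hmono hq1.le
      rw [hQ q, ← h1] at this
      simp at this
      rw [← h1] at hgt
      simp at hgt
      linarith
    · obtain ⟨q, hq1, hq2⟩ := exists_rat_btwn (show t < t + (F t - F 1 * t) / F 1 by
        have : 0 < (F t - F 1 * t) / F 1 := div_pos (by linarith) h1
        linarith)
      have hmq : F t ≤ F (q : ℝ) := hmono hq1.le
      rw [hQ q] at hmq
      have : F 1 * q - F 1 * t < F t - F 1 * t := by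
        have := (mul_lt_mul_iff_right₀ h1).mpr hq2
        rw [mul_add, mul_div_cancel₀ _ (ne_of_gt h1)] at this
        linarith
      linarith

/-- the coordinate `j` coefficient of a representation -/
noncomputable def cvec (u : (Fin r → ℝ) → ℝ) (j : Fin r) : ℝ :=
  u (Function.update (0 : Fin r → ℝ) j 1) - u 0

lemma cvec_nonneg (hu : IsRepresentation (R1star r) (R2star r z) u) (j : Fin r) :
    0 ≤ cvec u j := by
  have : (0 : Fin r → ℝ) ≤ Function.update (0 : Fin r → ℝ) j 1 := by
    intro k
    rcases eq_or_ne k j with rfl | hk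
    · simp
    · simp [Function.update_of_ne hk]
  have := u_mono hu this
  simp only [cvec]
  linarith

/-- the unit increment in cardinal coordinate `j` does not depend on the base point -/
lemma unit_incr_eq (hu : IsRepresentation (R1star r) (R2star r z) u) {j : Fin r}
    (hj : (j : ℕ) < z) (w : Fin r → ℝ) :
    u (Function.update w j 1) - u (Function.update w j 0) = cvec u j := by
  classical
  set wOrd : Fin r → ℝ := fun k => if (k : ℕ) < z then 0 else w k with hwOrd
  have step1 : u (Function.update w j 1) - u (Function.update w j 0)
      = u (Function.update wOrd j 1) - u (Function.update wOrd j 0) := by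
    apply shift_eq hu hj
    · intro k hk
      simp [hwOrd, Nat.not_lt.mpr hk]
    · norm_num
  -- now compare base wOrd (cardinal coords zero) to base 0 via their join
  have ordBase : ∀ v v' : Fin r → ℝ, v ≤ v' → (∀ k : Fin r, (k : ℕ) < z → v k = v' k) →
      u (Function.update v' j 1) - u (Function.update v' j 0)
        = u (Function.update v j 1) - u (Function.update v j 0) := by
    intro v v' hvv hcard
    have h1 : u (Function.update v' j 1) - u (Function.update v j 1)
        = u (Function.update v' j 0) - u (Function.update v j 0) := by
      apply ord_diff_invariant hu
      · intro k
        rcases eq_or_ne k j with rfl | hk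
        · simp
        · simp [Function.update_of_ne hk, hvv k]
      · intro k
        rcases eq_or_ne k j with rfl | hk
        · simp
        · simp [Function.update_of_ne hk, hvv k]
      · intro k hk
        rcases eq_or_ne k j with rfl | hkj
        · simp
        · simp [Function.update_of_ne hkj, hcard k hk]
      · intro k hk
        rcases eq_or_ne k j with rfl | hkj
        · simp
        · simp [Function.update_of_ne hkj, hcard k hk]
      · intro k hk
        have hkj : k ≠ j := by rintro rfl; omega
        simp [Function.update_of_ne hkj]
      · intro k hk
        have hkj : k ≠ j := by rintro rfl; omega
        simp [Function.update_of_ne hkj]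
    linarith
  set m : Fin r → ℝ := fun k => max (wOrd k) 0 with hm
  have hcard0 : ∀ k : Fin r, (k : ℕ) < z → wOrd k = m k := by
    intro k hk; simp [hm, hwOrd, hk]
  have hcard0' : ∀ k : Fin r, (k : ℕ) < z → (0 : Fin r → ℝ) k = m k := by
    intro k hk; simp [hm, hwOrd, hk]
  have h1 := ordBase wOrd m (fun k => le_max_left _ _) hcard0
  have h2 := ordBase (0 : Fin r → ℝ) m (fun k => le_max_right _ _) hcard0'
  have h0 : Function.update (0 : Fin r → ℝ) j 0 = (0 : Fin r → ℝ) := by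
    funext k
    rcases eq_or_ne k j with rfl | hk
    · simp
    · simp [Function.update_of_ne hk]
  rw [step1, ← h1, h2, h0, cvec]

/-- peel off one cardinal coordinate -/
lemma cardStep (hu : IsRepresentation (R1star r) (R2star r z) u) {j : Fin r}
    (hj : (j : ℕ) < z) (w : Fin r → ℝ) :
    u w = u (Function.update w j 0) + cvec u j * w j := by
  classical
  set F : ℝ → ℝ := fun t => u (Function.update w j t) - u (Function.update w j 0) with hF
  have hadd : ∀ s t : ℝ, F (s + t) = F s + F t := by
    intro s t
    have : u (Function.update w j (s + t)) - u (Function.update w j s)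
        = u (Function.update w j t) - u (Function.update w j 0) :=
      shift_eq hu hj (fun k _ => rfl) (by ring)
    simp only [hF]
    linarith
  have hmono : Monotone F := by
    intro s t hst
    have : Function.update w j s ≤ Function.update w j t := by
      intro k
      rcases eq_or_ne k j with rfl | hk
      · simp [hst]
      · simp [Function.update_of_ne hk]
    have := u_mono hu this
    simp only [hF]
    linarith
  have hlin := linear_of_additive_monotone F hadd hmono
  have hF1 : F 1 = cvec u j := unit_incr_eq hu hj w
  have hFw : F (w j) = cvec u j * w j := by rw [hlin (w j), hF1]
  have hup : Function.update w j (w j) = w := Function.update_eq_self j w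
  simp only [hF, hup] at hFw
  linarith

/-- the ordinal projection -/
def ordProj (z : ℕ) (x : Fin r → ℝ) : Fin r → ℝ := fun k => if (k : ℕ) < z then 0 else x k

/-- structure theorem for representations: affine in the cardinal coordinates -/
lemma rep_decomp (hu : IsRepresentation (R1star r) (R2star r z) u) (x : Fin r → ℝ) :
    u x = u (ordProj z x)
      + ∑ j ∈ Finset.univ.filter (fun j : Fin r => (j : ℕ) < z), cvec u j * x j := by
  classical
  set cardSet := Finset.univ.filter (fun j : Fin r => (j : ℕ) < z) with hcs
  have main : ∀ s : Finset (Fin r), s ⊆ cardSet →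
      u (fun k => if (k : ℕ) < z ∧ k ∉ s then 0 else x k)
        = u (ordProj z x) + ∑ j ∈ s, cvec u j * x j := by
    intro s
    induction s using Finset.induction_on with
    | empty =>
      intro _
      simp only [Finset.notMem_empty, not_false_iff, and_true, Finset.sum_empty, add_zero]
      rfl
    | @insert j s hjs ih =>
      intro hsub
      have hj : (j : ℕ) < z := by
        have := hsub (Finset.mem_insert_self j s)
        simpa [hcs] using this
      have hsub' : s ⊆ cardSet := fun k hk => hsub (Finset.mem_insert_of_mem hk)
      set w : Fin r → ℝ := fun k => if (k : ℕ) < z ∧ k ∉ insert j s then 0 else x k with hw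
      have hupd : Function.update w j 0 = fun k : Fin r => if (k : ℕ) < z ∧ k ∉ s then 0 else x k := by
        funext k
        rcases eq_or_ne k j with rfl | hk
        · simp [hj, hjs]
        · simp [Function.update_of_ne hk, hw, Finset.mem_insert, hk]
      have hwj : w j = x j := by simp [hw]
      have := cardStep hu hj w
      rw [hupd, hwj] at this
      rw [this, ih hsub', Finset.sum_insert hjs]
      ring
  have hfull := main cardSet (subset_refl _)
  have : (fun k : Fin r => if (k : ℕ) < z ∧ k ∉ cardSet then 0 else x k) = x := by
    funext k
    by_cases hk : (k : ℕ) < z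
    · simp [hcs, hk]
    · simp [hk]
  rw [this] at hfull
  exact hfull

/-- the ordinal part of a representation is monotone -/
lemma ordPart_mono (hu : IsRepresentation (R1star r) (R2star r z) u) :
    Monotone (fun x : Fin r → ℝ => u (ordProj z x)) := by
  intro x y hxy
  apply u_mono hu
  intro k
  simp only [ordProj]
  by_cases hk : (k : ℕ) < z
  · simp [hk]
  · simp [hk, hxy k]

end Structure

section AEMeas

variable {β : Type*} [MeasurableSpace β]

lemma countable_atoms (ρ : Measure ℝ) [IsFiniteMeasure ρ] :
    Set.Countable {t : ℝ | ρ {t} ≠ 0} := by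
  have h := Measure.countable_meas_pos_of_disjoint_iUnion (μ := ρ)
      (As := fun t : ℝ => {t}) (fun t => measurableSet_singleton t)
      (fun s t hst => by
        simp only [Function.onFun]
        exact Set.disjoint_singleton.mpr hst)
  have he : {t : ℝ | ρ {t} ≠ 0} = {t : ℝ | 0 < ρ {t}} := by
    ext t; simp [pos_iff_ne_zero]
  rw [he]
  exact h

lemma measure_countable_null {m : Measure ℝ} {s : Set ℝ} (hs : s.Countable)
    (h : ∀ t ∈ s, m {t} = 0) : m s = 0 := by
  have he : s = ⋃ t ∈ s, {t} := by simp
  rw [he]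
  exact (measure_biUnion_null_iff hs).mpr h

/-- Core measurability lemma: a function on `ℝ × β` which is bounded and monotone in the first
variable, with a.e.-measurable slices, is a.e.-measurable w.r.t. any product measure. -/
lemma aemeasurable_of_mono_slices
    (ρ : Measure ℝ) [IsProbabilityMeasure ρ] (κ : Measure β) [IsProbabilityMeasure κ]
    (H : ℝ × β → ℝ) (M : ℝ)
    (hb : ∀ p, |H p| ≤ M)
    (hm1 : ∀ b, Monotone (fun t => H (t, b)))
    (hsec : ∀ t : ℝ, AEMeasurable (fun b => H (t, b)) κ) :
    AEMeasurable H (ρ.prod κ) := by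
  classical
  rcases isEmpty_or_nonempty β with hβ | hβ
  · have : IsEmpty (ℝ × β) := ⟨fun p => hβ.false p.2⟩
    exact (measurable_of_empty H).aemeasurable
  have hM0 : 0 ≤ M := le_trans (abs_nonneg _) (hb (0, Classical.arbitrary β))
  have hHb : ∀ p : ℝ × β, -M ≤ H p ∧ H p ≤ M := fun p => abs_le.mp (hb p)
  -- clamped measurable versions of the slices
  set clamp : ℝ → ℝ := fun x => max (-M) (min M x) with hclamp
  have hclamp_meas : Measurable clamp := measurable_const.max (measurable_const.min measurable_id)
  have hclamp_id : ∀ x, |x| ≤ M → clamp x = x := by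
    intro x hx
    obtain ⟨h1, h2⟩ := abs_le.mp hx
    simp only [hclamp]
    rw [min_eq_right h2, max_eq_right h1]
  have hclamp_le : ∀ x, -M ≤ clamp x ∧ clamp x ≤ M := by
    intro x
    constructor
    · exact le_max_left _ _
    · exact max_le (by linarith) (min_le_left _ _)
  set v : ℝ → β → ℝ := fun t b => clamp ((hsec t).mk _ b) with hv
  have hv_meas : ∀ t, Measurable (v t) := fun t => hclamp_meas.comp (hsec t).measurable_mk
  have hv_ae : ∀ t, (fun b => H (t, b)) =ᵐ[κ] v t := by
    intro t
    filter_upwards [(hsec t).ae_eq_mk] with b hb'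
    simp only [hv]
    rw [← hb', hclamp_id _ (hb _)]
  -- measurable approximants and their "true" counterparts
  set L : ℝ × β → ℝ := fun p => ⨆ q : ℚ, if (q : ℝ) < p.1 then v q p.2 else -M with hL
  set R : ℝ × β → ℝ := fun p => ⨅ q : ℚ, if p.1 < (q : ℝ) then v q p.2 else M with hR
  have hL_meas : Measurable L := by
    apply Measurable.iSup
    intro q
    exact Measurable.ite (measurableSet_lt measurable_const measurable_fst)
      ((hv_meas q).comp measurable_snd) measurable_const
  have hR_meas : Measurable R := by
    apply Measurable.iInf
    intro q
    exact Measurable.ite (measurableSet_lt measurable_fst measurable_const)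
      ((hv_meas q).comp measurable_snd) measurable_const
  set Lt : ℝ × β → ℝ := fun p => ⨆ q : ℚ, if (q : ℝ) < p.1 then H (q, p.2) else -M with hLt
  set Rt : ℝ × β → ℝ := fun p => ⨅ q : ℚ, if p.1 < (q : ℝ) then H (q, p.2) else M with hRt
  have hLt_le : ∀ p, Lt p ≤ H p := by
    intro p
    apply ciSup_le
    intro q
    split_ifs with h
    · exact hm1 p.2 h.le
    · exact (hHb p).1
  have hle_Rt : ∀ p, H p ≤ Rt p := by
    intro p
    apply le_ciInf
    intro q
    split_ifs with h
    · exact hm1 p.2 h.le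
    · exact (hHb p).2
  have hbddLt : ∀ p : ℝ × β, BddAbove (Set.range fun q : ℚ =>
      if (q : ℝ) < p.1 then H (q, p.2) else -M) := by
    intro p
    refine ⟨M, ?_⟩
    rintro x ⟨q, rfl⟩
    dsimp only
    split_ifs
    · exact (hHb _).2
    · linarith
  have hbddRt : ∀ p : ℝ × β, BddBelow (Set.range fun q : ℚ =>
      if p.1 < (q : ℝ) then H (q, p.2) else M) := by
    intro p
    refine ⟨-M, ?_⟩
    rintro x ⟨q, rfl⟩
    dsimp only
    split_ifs
    · exact (hHb _).1
    · linarith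
  -- at continuity points the sandwich is tight
  have hcont_eq : ∀ (b : β) (t : ℝ), ContinuousAt (fun s => H (s, b)) t →
      Lt (t, b) = H (t, b) ∧ Rt (t, b) = H (t, b) := by
    intro b t hct
    constructor
    · refine le_antisymm (hLt_le _) ?_
      apply le_of_forall_pos_le_add
      intro ε hε
      obtain ⟨δ, hδ, hδ'⟩ := Metric.continuousAt_iff.mp hct ε hε
      obtain ⟨q, hq1, hq2⟩ := exists_rat_btwn (show t - δ < t by linarith)
      have hdist : dist (q : ℝ) t < δ := by
        rw [Real.dist_eq, abs_lt]
        constructor <;> linarith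
      have := hδ' hdist
      rw [Real.dist_eq, abs_lt] at this
      have hterm : H ((q : ℝ), b) ≤ Lt (t, b) := by
        have hle := le_ciSup (hbddLt (t, b)) q
        rw [if_pos hq2] at hle
        exact hle
      linarith [this.1, this.2]
    · refine le_antisymm ?_ (hle_Rt _)
      apply le_of_forall_pos_le_add
      intro ε hε
      obtain ⟨δ, hδ, hδ'⟩ := Metric.continuousAt_iff.mp hct ε hε
      obtain ⟨q, hq1, hq2⟩ := exists_rat_btwn (show t < t + δ by linarith)
      have hdist : dist (q : ℝ) t < δ := by
        rw [Real.dist_eq, abs_lt]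
        constructor <;> linarith
      have := hδ' hdist
      rw [Real.dist_eq, abs_lt] at this
      have hterm : Rt (t, b) ≤ H ((q : ℝ), b) := by
        have hle := ciInf_le (hbddRt (t, b)) q
        rw [if_pos hq1] at hle
        exact hle
      linarith [this.1, this.2]
  -- the set of discontinuities in t is countable for every b
  have hjump : ∀ b : β, Set.Countable {t : ℝ | Lt (t, b) < Rt (t, b)} := by
    intro b
    apply Set.Countable.mono ?_ ((hm1 b).countable_not_continuousAt)
    intro t ht
    simp only [Set.mem_setOf_eq] at ht ⊢
    intro hcont
    obtain ⟨h1, h2⟩ := hcont_eq b t hcont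
    rw [h1, h2] at ht
    exact lt_irrefl _ ht
  -- atoms of ρ
  set A : Set ℝ := {t : ℝ | ρ {t} ≠ 0} with hA
  have hAc : A.Countable := countable_atoms ρ
  have hAm : MeasurableSet A := hAc.measurableSet
  have hresA : ∀ t : ℝ, (ρ.restrict Aᶜ) {t} = 0 := by
    intro t
    rw [Measure.restrict_apply (measurableSet_singleton t)]
    by_cases ht : t ∈ A
    · have : {t} ∩ Aᶜ = ∅ := by
        ext s; simp only [Set.mem_inter_iff, Set.mem_singleton_iff, Set.mem_compl_iff,
          Set.mem_empty_iff_false, iff_false, not_and]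
        rintro rfl; simp [ht]
      rw [this, measure_empty]
    · have hsub : {t} ∩ Aᶜ ⊆ {t} := Set.inter_subset_left
      refine le_antisymm (le_trans (measure_mono hsub) ?_) (by simp)
      simp only [hA, Set.mem_setOf_eq, not_not] at ht
      rw [ht]
  -- the good κ-set where the rational slices agree with their versions
  have hW : ∀ᵐ b ∂κ, ∀ q : ℚ, v q b = H ((q : ℝ), b) := by
    rw [ae_all_iff]
    intro q
    exact (hv_ae q).symm
  set T : Set β := toMeasurable κ {b | ¬ ∀ q : ℚ, v q b = H ((q : ℝ), b)} with hT
  have hTm : MeasurableSet T := measurableSet_toMeasurable _ _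
  have hT0 : κ T = 0 := by
    rw [hT, measure_toMeasurable]
    exact ae_iff.mp hW
  have hWsub : {b | ¬ ∀ q : ℚ, v q b = H ((q : ℝ), b)} ⊆ T := subset_toMeasurable _ _
  have hgoodLR : ∀ b ∉ T, ∀ t, L (t, b) = Lt (t, b) ∧ R (t, b) = Rt (t, b) := by
    intro b hbT t
    have hgood : ∀ q : ℚ, v q b = H ((q : ℝ), b) := by
      by_contra hcon
      exact hbT (hWsub hcon)
    constructor
    · apply iSup_congr
      intro q
      split_ifs
      · exact hgood q
      · rfl
    · apply iInf_congr
      intro q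
      split_ifs
      · exact hgood q
      · rfl
  -- PART 1 : the non-atomic part
  have hfirst : AEMeasurable H ((ρ.restrict Aᶜ).prod κ) := by
    set S2 : Set (ℝ × β) := {p | L p < R p ∧ p.2 ∉ T} with hS2
    have hS2m : MeasurableSet S2 :=
      (measurableSet_lt hL_meas hR_meas).inter (measurable_snd hTm.compl)
    have hS2null : (ρ.restrict Aᶜ).prod κ S2 = 0 := by
      rw [Measure.prod_apply_symm hS2m]
      have hae : (fun b => (ρ.restrict Aᶜ) ((fun t => (t, b)) ⁻¹' S2)) =ᵐ[κ] (fun _ => 0) := by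
        have hTae : ∀ᵐ b ∂κ, b ∉ T := (measure_eq_zero_iff_ae_notMem).mp hT0
        filter_upwards [hTae] with b hbT
        have hsec_eq : ((fun t => (t, b)) ⁻¹' S2) ⊆ {t : ℝ | Lt (t, b) < Rt (t, b)} := by
          intro t ht
          simp only [hS2, Set.mem_preimage, Set.mem_setOf_eq] at ht
          obtain ⟨h1, h2⟩ := hgoodLR b hbT t
          simp only [Set.mem_setOf_eq]
          rw [← h1, ← h2]
          exact ht.1
        exact measure_mono_null hsec_eq
          (measure_countable_null (hjump b) (fun t _ => hresA t))
      rw [lintegral_congr_ae hae, lintegral_zero]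
    have hTnull : (ρ.restrict Aᶜ).prod κ {p : ℝ × β | p.2 ∈ T} = 0 := by
      have heq : {p : ℝ × β | p.2 ∈ T} = Set.univ ×ˢ T := by
        ext p; simp
      rw [heq, Measure.prod_prod, hT0, mul_zero]
    apply hL_meas.aemeasurable.congr
    have hsub : {p : ℝ × β | ¬ L p = H p} ⊆ S2 ∪ {p : ℝ × β | p.2 ∈ T} := by
      intro p hp
      simp only [Set.mem_setOf_eq] at hp
      by_contra hcon
      rw [Set.mem_union] at hcon
      push_neg at hcon
      obtain ⟨hp1, hp2⟩ := hcon
      simp only [Set.mem_setOf_eq] at hp2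
      have hRL : R p ≤ L p := by
        by_contra hc
        push_neg at hc
        exact hp1 (by simp only [hS2, Set.mem_setOf_eq]; exact ⟨hc, hp2⟩)
      obtain ⟨h1, h2⟩ := hgoodLR p.2 hp2 p.1
      have hLp : L (p.1, p.2) = Lt (p.1, p.2) := h1
      have hRp : R (p.1, p.2) = Rt (p.1, p.2) := h2
      have hp' : (p.1, p.2) = p := Prod.mk.eta
      rw [hp'] at hLp hRp
      have : Lt p = H p := le_antisymm (hLt_le p) (by
        calc H p ≤ Rt p := hle_Rt p
        _ = R p := hRp.symm
        _ ≤ L p := hRL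
        _ = Lt p := hLp)
      rw [hLp, this] at hp
      exact hp rfl
    rw [Filter.eventuallyEq_iff_exists_mem]
    refine ⟨(S2 ∪ {p : ℝ × β | p.2 ∈ T})ᶜ, ?_, ?_⟩
    · rw [mem_ae_iff]
      rw [compl_compl]
      exact measure_union_null hS2null hTnull
    · intro p hp
      by_contra hne
      exact hp (hsub hne)
  -- PART 2 : the atomic part
  have hsecond : AEMeasurable H ((ρ.restrict A).prod κ) := by
    by_cases hAe : A = ∅
    · rw [hAe, Measure.restrict_empty, Measure.zero_prod]
      exact aemeasurable_zero_measure
    obtain ⟨f, hfA⟩ := hAc.exists_eq_range (Set.nonempty_iff_ne_empty.mpr hAe)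
    set D : ℝ × β → ℝ := fun p => ⨆ k : ℕ, if p.1 = f k then v (f k) p.2 else -M with hD
    have hD_meas : Measurable D := by
      apply Measurable.iSup
      intro k
      exact Measurable.ite (measurable_fst (measurableSet_singleton (f k)))
        ((hv_meas (f k)).comp measurable_snd) measurable_const
    set T' : Set β := toMeasurable κ {b | ¬ ∀ k : ℕ, v (f k) b = H (f k, b)} with hT'
    have hT'm : MeasurableSet T' := measurableSet_toMeasurable _ _
    have hT'0 : κ T' = 0 := by
      rw [hT', measure_toMeasurable]
      apply ae_iff.mp
      rw [ae_all_iff]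
      intro k
      exact (hv_ae (f k)).symm
    have hW'sub : {b | ¬ ∀ k : ℕ, v (f k) b = H (f k, b)} ⊆ T' := subset_toMeasurable _ _
    have hDH : ∀ p : ℝ × β, p.1 ∈ A → p.2 ∉ T' → D p = H p := by
      intro p hp1 hp2
      have hgood : ∀ k : ℕ, v (f k) p.2 = H (f k, p.2) := by
        by_contra hcon
        exact hp2 (hW'sub hcon)
      rw [hfA] at hp1
      obtain ⟨k0, hk0⟩ := hp1
      have hbdd : BddAbove (Set.range fun k : ℕ => if p.1 = f k then v (f k) p.2 else -M) := by
        refine ⟨M, ?_⟩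
        rintro x ⟨k, rfl⟩
        dsimp only
        split_ifs
        · exact (hclamp_le _).2
        · linarith
      apply le_antisymm
      · apply ciSup_le
        intro k
        split_ifs with h
        · rw [hgood k, ← h]
        · exact (hHb p).1
      · have hle := le_ciSup hbdd k0
        rw [if_pos hk0.symm] at hle
        rw [hgood k0, hk0] at hle
        exact hle
    apply hD_meas.aemeasurable.congr
    have hAnull : (ρ.restrict A).prod κ {p : ℝ × β | p.1 ∉ A} = 0 := by
      have heq : {p : ℝ × β | p.1 ∉ A} = Aᶜ ×ˢ Set.univ := by
        ext p; simp
      rw [heq, Measure.prod_prod, Measure.restrict_apply hAm.compl]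
      simp
    have hT'null : (ρ.restrict A).prod κ {p : ℝ × β | p.2 ∈ T'} = 0 := by
      have heq : {p : ℝ × β | p.2 ∈ T'} = Set.univ ×ˢ T' := by
        ext p; simp
      rw [heq, Measure.prod_prod, hT'0, mul_zero]
    rw [Filter.eventuallyEq_iff_exists_mem]
    refine ⟨({p : ℝ × β | p.1 ∉ A} ∪ {p : ℝ × β | p.2 ∈ T'})ᶜ, ?_, ?_⟩
    · rw [mem_ae_iff, compl_compl]
      exact measure_union_null hAnull hT'null
    · intro p hp
      simp only [Set.mem_compl_iff, Set.mem_union, Set.mem_setOf_eq, not_or, not_not] at hp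
      exact hDH p hp.1 hp.2
  -- combine
  have hsplit : ρ.prod κ = (ρ.restrict A).prod κ + (ρ.restrict Aᶜ).prod κ := by
    rw [← Measure.add_prod, Measure.restrict_add_restrict_compl hAm]
  rw [hsplit]
  exact aemeasurable_add_measure_iff.mpr ⟨hsecond, hfirst⟩

end AEMeas

section Pi

/-- monotonicity of `Fin.cons` -/
lemma fin_cons_mono {n : ℕ} {t t' : ℝ} {y y' : Fin n → ℝ} (ht : t ≤ t') (hy : y ≤ y') :
    (Fin.cons t y : Fin (n + 1) → ℝ) ≤ Fin.cons t' y' := by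
  intro k
  refine Fin.cases ?_ ?_ k
  · simpa using ht
  · intro j
    simpa using hy j

/-- the canonical equivalence as a composition helper -/
lemma comp_cons_eq {n : ℕ} (G : (Fin (n + 1) → ℝ) → ℝ) (x : Fin (n + 1) → ℝ) :
    G (Fin.cons (x 0) (Fin.tail x)) = G x := by
  rw [Fin.cons_self_tail]

/-- Part (a): bounded monotone functions on finite-dimensional real pi-spaces are
a.e.-measurable with respect to any product of probability measures -/
lemma aemeasurable_monotone_pi : ∀ (n : ℕ) (G : (Fin n → ℝ) → ℝ) (M : ℝ),
    (∀ x, |G x| ≤ M) → Monotone G → ∀ (ρ : Fin n → Measure ℝ),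
    (∀ i, IsProbabilityMeasure (ρ i)) → AEMeasurable G (Measure.pi ρ) := by
  intro n
  induction n with
  | zero =>
    intro G M hb hm ρ hprob
    exact (Subsingleton.measurable (α := Fin 0 → ℝ)).aemeasurable
  | succ n IH =>
    intro G M hb hm ρ hprob
    haveI : ∀ i, IsProbabilityMeasure (ρ i) := hprob
    haveI : ∀ j : Fin n, IsProbabilityMeasure (ρ (Fin.succ j)) := fun j => hprob _
    set κ : Measure (Fin n → ℝ) := Measure.pi (fun j : Fin n => ρ (Fin.succ j)) with hκ
    haveI : IsProbabilityMeasure κ := by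
      rw [hκ]; infer_instance
    set H : ℝ × (Fin n → ℝ) → ℝ := fun p => G (Fin.cons p.1 p.2) with hH
    have hHb : ∀ p, |H p| ≤ M := fun p => hb _
    have hHm1 : ∀ y, Monotone (fun t => H (t, y)) := by
      intro y t t' htt
      exact hm (fin_cons_mono htt le_rfl)
    have hHsec : ∀ t : ℝ, AEMeasurable (fun y => H (t, y)) κ := by
      intro t
      exact IH (fun y => G (Fin.cons t y)) M (fun y => hb _)
        (fun y y' hyy => hm (fin_cons_mono le_rfl hyy)) _ (fun j => hprob _)
    have hHmeas : AEMeasurable H ((ρ 0).prod κ) :=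
      aemeasurable_of_mono_slices (ρ 0) κ H M hHb hHm1 hHsec
    -- transport through the measurable equivalence
    have hmp := measurePreserving_piFinSuccAbove (α := fun _ : Fin (n + 1) => ℝ) ρ 0
    have hsa : (fun j : Fin n => ρ ((0 : Fin (n + 1)).succAbove j))
        = fun j : Fin n => ρ (Fin.succ j) := by
      funext j
      rw [Fin.succAbove_zero]
    rw [hsa] at hmp
    have hiff := hmp.aemeasurable_comp_iff
      (MeasurableEquiv.piFinSuccAbove (fun _ : Fin (n + 1) => ℝ) 0).measurableEmbedding
      (g := H)
    rw [← hκ] at hiff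
    have hcomp : (H ∘ (MeasurableEquiv.piFinSuccAbove (fun _ : Fin (n + 1) => ℝ) 0)) = G := by
      funext x
      have h0 : (MeasurableEquiv.piFinSuccAbove (fun _ : Fin (n + 1) => ℝ) 0) x
          = (x 0, Fin.tail x) := by
        simp [MeasurableEquiv.piFinSuccAbove, Fin.removeNth_zero]
      simp only [Function.comp_apply, h0, hH]
      exact comp_cons_eq G x
    rw [← hcomp]
    exact hiff.mpr hHmeas

end Pi

section PB

/-- slices of an a.e.-equality over a product measure, fixing the first coordinate -/
lemma slice_left {α β : Type*} [MeasurableSpace α] [MeasurableSpace β]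
    {μ : Measure α} {ν : Measure β} [SFinite ν] {f g : α × β → ℝ}
    (h : f =ᵐ[μ.prod ν] g) : ∀ᵐ x ∂μ, (fun y => f (x, y)) =ᵐ[ν] (fun y => g (x, y)) :=
  Measure.ae_ae_of_ae_prod h

/-- slices of an a.e.-equality over a product measure, fixing the second coordinate -/
lemma slice_right {α β : Type*} [MeasurableSpace α] [MeasurableSpace β]
    {μ : Measure α} {ν : Measure β} [SFinite μ] [SFinite ν] {f g : α × β → ℝ}
    (h : f =ᵐ[μ.prod ν] g) : ∀ᵐ y ∂ν, (fun x => f (x, y)) =ᵐ[μ] (fun x => g (x, y)) := by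
  have hswap : (fun q : β × α => f (q.2, q.1)) =ᵐ[ν.prod μ] (fun q : β × α => g (q.2, q.1)) :=
    (Measure.measurePreserving_swap).quasiMeasurePreserving.ae_eq h
  exact Measure.ae_ae_of_ae_prod hswap

lemma integrable_of_bounded_version {α : Type*} [MeasurableSpace α] {μ : Measure α}
    [IsFiniteMeasure μ] {f g : α → ℝ} (hfm : Measurable f) (hfg : g =ᵐ[μ] f) {M : ℝ}
    (hgb : ∀ x, |g x| ≤ M) : Integrable f μ := by
  apply Integrable.mono' (integrable_const M) hfm.aestronglyMeasurable
  filter_upwards [hfg] with p hp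
  rw [← hp, Real.norm_eq_abs]
  exact hgb p

/-- changing the first factor of a product measure against FOSD -/
lemma step_first {β : Type*} [MeasurableSpace β]
    (μ0 ν0 : Measure ℝ) [IsProbabilityMeasure μ0] [IsProbabilityMeasure ν0]
    (κ : Measure β) [IsProbabilityMeasure κ]
    (H : ℝ × β → ℝ) (M : ℝ) (hb : ∀ p, |H p| ≤ M)
    (hm1 : ∀ b, Monotone (fun t => H (t, b)))
    (hμ : AEMeasurable H (μ0.prod κ)) (hν : AEMeasurable H (ν0.prod κ))
    (hFOSD : ∀ φ : ℝ → ℝ, Measurable φ → Monotone φ → (∃ B, ∀ x, |φ x| ≤ B) →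
      ∫ t, φ t ∂ν0 ≤ ∫ t, φ t ∂μ0) :
    ∫ p, H p ∂(ν0.prod κ) ≤ ∫ p, H p ∂(μ0.prod κ) := by
  have h1e : H =ᵐ[μ0.prod κ] hμ.mk H := hμ.ae_eq_mk
  have h2e : H =ᵐ[ν0.prod κ] hν.mk H := hν.ae_eq_mk
  have h1int : Integrable (hμ.mk H) (μ0.prod κ) :=
    integrable_of_bounded_version hμ.measurable_mk h1e hb
  have h2int : Integrable (hν.mk H) (ν0.prod κ) :=
    integrable_of_bounded_version hν.measurable_mk h2e hb
  rw [integral_congr_ae h1e, integral_congr_ae h2e]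
  rw [integral_prod_symm _ h1int, integral_prod_symm _ h2int]
  apply integral_mono_ae h2int.integral_prod_right h1int.integral_prod_right
  filter_upwards [slice_right h1e, slice_right h2e] with b hb1 hb2
  calc ∫ t, hν.mk H (t, b) ∂ν0 = ∫ t, H (t, b) ∂ν0 := integral_congr_ae hb2.symm
    _ ≤ ∫ t, H (t, b) ∂μ0 :=
        hFOSD _ (hm1 b).measurable (hm1 b) ⟨M, fun x => hb _⟩
    _ = ∫ t, hμ.mk H (t, b) ∂μ0 := integral_congr_ae hb1

/-- changing the second factor of a product measure -/
lemma step_second {β : Type*} [MeasurableSpace β]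
    (ρ : Measure ℝ) [IsProbabilityMeasure ρ]
    (κ1 κ2 : Measure β) [IsProbabilityMeasure κ1] [IsProbabilityMeasure κ2]
    (H : ℝ × β → ℝ) (M : ℝ) (hb : ∀ p, |H p| ≤ M)
    (h1m : AEMeasurable H (ρ.prod κ1)) (h2m : AEMeasurable H (ρ.prod κ2))
    (hcomp : ∀ t : ℝ, ∫ y, H (t, y) ∂κ2 ≤ ∫ y, H (t, y) ∂κ1) :
    ∫ p, H p ∂(ρ.prod κ2) ≤ ∫ p, H p ∂(ρ.prod κ1) := by
  have h1e : H =ᵐ[ρ.prod κ1] h1m.mk H := h1m.ae_eq_mk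
  have h2e : H =ᵐ[ρ.prod κ2] h2m.mk H := h2m.ae_eq_mk
  have h1int : Integrable (h1m.mk H) (ρ.prod κ1) :=
    integrable_of_bounded_version h1m.measurable_mk h1e hb
  have h2int : Integrable (h2m.mk H) (ρ.prod κ2) :=
    integrable_of_bounded_version h2m.measurable_mk h2e hb
  rw [integral_congr_ae h1e, integral_congr_ae h2e]
  rw [integral_prod _ h1int, integral_prod _ h2int]
  apply integral_mono_ae h2int.integral_prod_left h1int.integral_prod_left
  filter_upwards [slice_left h1e, slice_left h2e] with t h1t h2t
  calc ∫ y, h2m.mk H (t, y) ∂κ2 = ∫ y, H (t, y) ∂κ2 := integral_congr_ae h2t.symm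
    _ ≤ ∫ y, H (t, y) ∂κ1 := hcomp t
    _ = ∫ y, h1m.mk H (t, y) ∂κ1 := integral_congr_ae h1t

/-- Part (b): integrals of bounded monotone functions respect coordinatewise FOSD of
product measures. -/
lemma pi_integral_fosd : ∀ (n : ℕ) (G : (Fin n → ℝ) → ℝ) (M : ℝ),
    (∀ x, |G x| ≤ M) → Monotone G →
    ∀ (μ ν : Fin n → Measure ℝ),
    (∀ i, IsProbabilityMeasure (μ i)) → (∀ i, IsProbabilityMeasure (ν i)) →
    (∀ i, ∀ φ : ℝ → ℝ, Measurable φ → Monotone φ → (∃ B, ∀ x, |φ x| ≤ B) →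
      ∫ t, φ t ∂(ν i) ≤ ∫ t, φ t ∂(μ i)) →
    ∫ x, G x ∂(Measure.pi ν) ≤ ∫ x, G x ∂(Measure.pi μ) := by
  intro n
  induction n with
  | zero =>
    intro G M hb hm μ ν hμp hνp hf
    haveI := hμp; haveI := hνp
    have hG : G = fun _ => G default := funext fun x => congrArg G (Subsingleton.elim x default)
    rw [hG, integral_const, integral_const]
    simp
  | succ n IH =>
    intro G M hb hm μ ν hμp hνp hf
    haveI := hμp; haveI := hνp
    haveI : ∀ j : Fin n, IsProbabilityMeasure (μ (Fin.succ j)) := fun j => hμp _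
    haveI : ∀ j : Fin n, IsProbabilityMeasure (ν (Fin.succ j)) := fun j => hνp _
    set κμ : Measure (Fin n → ℝ) := Measure.pi (fun j : Fin n => μ (Fin.succ j)) with hκμ
    set κν : Measure (Fin n → ℝ) := Measure.pi (fun j : Fin n => ν (Fin.succ j)) with hκν
    haveI : IsProbabilityMeasure κμ := by rw [hκμ]; infer_instance
    haveI : IsProbabilityMeasure κν := by rw [hκν]; infer_instance
    set H : ℝ × (Fin n → ℝ) → ℝ := fun p => G (Fin.cons p.1 p.2) with hH
    have hHb : ∀ p, |H p| ≤ M := fun p => hb _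
    have hHm1 : ∀ y, Monotone (fun t => H (t, y)) :=
      fun y t t' htt => hm (fin_cons_mono htt le_rfl)
    have hHm2 : ∀ t, Monotone (fun y => H (t, y)) :=
      fun t y y' hyy => hm (fin_cons_mono le_rfl hyy)
    have hA1 : AEMeasurable H ((μ 0).prod κμ) :=
      aemeasurable_of_mono_slices (μ 0) κμ H M hHb hHm1
        (fun t => aemeasurable_monotone_pi n (fun y => H (t, y)) M (fun y => hHb _)
          (hHm2 t) _ (fun j => hμp _))
    have hA2 : AEMeasurable H ((ν 0).prod κμ) :=
      aemeasurable_of_mono_slices (ν 0) κμ H M hHb hHm1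
        (fun t => aemeasurable_monotone_pi n (fun y => H (t, y)) M (fun y => hHb _)
          (hHm2 t) _ (fun j => hμp _))
    have hA3 : AEMeasurable H ((ν 0).prod κν) :=
      aemeasurable_of_mono_slices (ν 0) κν H M hHb hHm1
        (fun t => aemeasurable_monotone_pi n (fun y => H (t, y)) M (fun y => hHb _)
          (hHm2 t) _ (fun j => hνp _))
    -- transport the pi-integrals
    have hcompG : ∀ x : Fin (n + 1) → ℝ,
        H ((MeasurableEquiv.piFinSuccAbove (fun _ : Fin (n + 1) => ℝ) 0) x) = G x := by
      intro x
      have h0 : (MeasurableEquiv.piFinSuccAbove (fun _ : Fin (n + 1) => ℝ) 0) x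
          = (x 0, Fin.tail x) := by
        simp [MeasurableEquiv.piFinSuccAbove, Fin.removeNth_zero]
      rw [h0]
      simp only [hH]
      exact comp_cons_eq G x
    have htransμ : ∫ x, G x ∂(Measure.pi μ) = ∫ p, H p ∂((μ 0).prod κμ) := by
      have hmp := measurePreserving_piFinSuccAbove (α := fun _ : Fin (n + 1) => ℝ) μ 0
      have hsa : (fun j : Fin n => μ ((0 : Fin (n + 1)).succAbove j))
          = fun j : Fin n => μ (Fin.succ j) := by
        funext j; rw [Fin.succAbove_zero]
      rw [hsa] at hmp
      have := hmp.integral_comp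
        (MeasurableEquiv.piFinSuccAbove (fun _ : Fin (n + 1) => ℝ) 0).measurableEmbedding H
      rw [← hκμ] at this
      rw [← this]
      apply integral_congr_ae
      filter_upwards with x
      rw [hcompG x]
    have htransν : ∫ x, G x ∂(Measure.pi ν) = ∫ p, H p ∂((ν 0).prod κν) := by
      have hmp := measurePreserving_piFinSuccAbove (α := fun _ : Fin (n + 1) => ℝ) ν 0
      have hsa : (fun j : Fin n => ν ((0 : Fin (n + 1)).succAbove j))
          = fun j : Fin n => ν (Fin.succ j) := by
        funext j; rw [Fin.succAbove_zero]
      rw [hsa] at hmp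
      have := hmp.integral_comp
        (MeasurableEquiv.piFinSuccAbove (fun _ : Fin (n + 1) => ℝ) 0).measurableEmbedding H
      rw [← hκν] at this
      rw [← this]
      apply integral_congr_ae
      filter_upwards with x
      rw [hcompG x]
    rw [htransμ, htransν]
    have step2 : ∫ p, H p ∂((ν 0).prod κν) ≤ ∫ p, H p ∂((ν 0).prod κμ) := by
      apply step_second (ν 0) κμ κν H M hHb hA2 hA3
      intro t
      exact IH (fun y => H (t, y)) M (fun y => hHb _) (hHm2 t) _ _
        (fun j => hμp _) (fun j => hνp _) (fun j => hf (Fin.succ j))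
    have step1 : ∫ p, H p ∂((ν 0).prod κμ) ≤ ∫ p, H p ∂((μ 0).prod κμ) := by
      apply step_first (μ 0) (ν 0) κμ H M hHb hHm1 hA1 hA2
      exact hf 0
    exact le_trans step2 step1

end PB

/-- the joint law of finitely many independent random variables is the product of the laws -/
lemma map_pi_of_iIndep {Ω : Type*} [MeasurableSpace Ω] (π : Measure Ω) [IsProbabilityMeasure π]
    {n : ℕ} (f : Fin n → Ω → ℝ) (hm : ∀ i, Measurable (f i))
    (hind : ProbabilityTheory.iIndepFun
      f π) :
    π.map (fun ω i => f i ω) = Measure.pi (fun i => π.map (f i)) := by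
  refine (Measure.pi_eq ?_).symm
  intro s hs
  rw [Measure.map_apply (measurable_pi_iff.mpr hm) (MeasurableSet.univ_pi hs)]
  have hpre : (fun ω i => f i ω) ⁻¹' Set.pi Set.univ s = ⋂ i ∈ Finset.univ, f i ⁻¹' s i := by
    ext ω
    simp [Set.mem_pi]
  rw [hpre]
  rw [ProbabilityTheory.iIndepFun.measure_inter_preimage_eq_mul hind Finset.univ
    (fun i _ => hs i)]
  apply Finset.prod_congr rfl
  intro i _
  rw [Measure.map_apply (hm i) (hs i)]


/-- Proposition 7 iii), addition: under joint independence of the components of `X` and of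
`Y`, componentwise expectation dominance (I) together with first-order stochastic dominance
in all ordinal dimensions (II) implies GSD on `pref(ℝ^r)`. -/
theorem stmt16 {Ω : Type*} [MeasurableSpace Ω] (π : Measure Ω) [IsProbabilityMeasure π]
    (r z : ℕ) (hz : z ≤ r) (X Y : Ω → (Fin r → ℝ))
    (hX : memF π (R1star r) (R2star r z) X) (hY : memF π (R1star r) (R2star r z) Y)
    (hXi : ∀ j, Integrable (fun ω => X ω j) π) (hYi : ∀ j, Integrable (fun ω => Y ω j) π)
    (hXm : ∀ j, Measurable fun ω => X ω j) (hYm : ∀ j, Measurable fun ω => Y ω j)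
    (hXind : ProbabilityTheory.iIndepFun
      (fun j ω => X ω j) π)
    (hYind : ProbabilityTheory.iIndepFun
      (fun j ω => Y ω j) π)
    (hI : ∀ j, ∫ ω, Y ω j ∂π ≤ ∫ ω, X ω j ∂π)
    (hII : ∀ j : Fin r, z ≤ (j : ℕ) →
      ∀ u : ℝ → ℝ, Measurable u → Monotone u → (∃ B, ∀ t, |u t| ≤ B) →
        ∫ ω, u (Y ω j) ∂π ≤ ∫ ω, u (X ω j) ∂π) :
    GSDrel π (R1star r) (R2star r z) X Y := by
  classical
  intro u hu
  have hXu : Integrable (fun ω => u (X ω)) π := hX u hu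
  have hYu : Integrable (fun ω => u (Y ω)) π := hY u hu
  set G : (Fin r → ℝ) → ℝ := fun x => u (ordProj z x) with hG
  have hGmono : Monotone G := ordPart_mono hu
  set cardS : Finset (Fin r) := Finset.univ.filter (fun j : Fin r => (j : ℕ) < z) with hcardS
  have hdecomp : ∀ x : Fin r → ℝ, u x = G x + ∑ j ∈ cardS, cvec u j * x j :=
    fun x => rep_decomp hu x
  -- integrability of the pieces
  have hSXi : Integrable (fun ω => ∑ j ∈ cardS, cvec u j * X ω j) π :=
    integrable_finset_sum _ (fun j _ => (hXi j).const_mul _)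
  have hSYi : Integrable (fun ω => ∑ j ∈ cardS, cvec u j * Y ω j) π :=
    integrable_finset_sum _ (fun j _ => (hYi j).const_mul _)
  have hGX : Integrable (fun ω => G (X ω)) π := by
    have he : (fun ω => G (X ω))
        = (fun ω => u (X ω) - ∑ j ∈ cardS, cvec u j * X ω j) := by
      funext ω
      rw [hdecomp (X ω)]
      ring
    rw [he]
    exact hXu.sub hSXi
  have hGY : Integrable (fun ω => G (Y ω)) π := by
    have he : (fun ω => G (Y ω))
        = (fun ω => u (Y ω) - ∑ j ∈ cardS, cvec u j * Y ω j) := by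
      funext ω
      rw [hdecomp (Y ω)]
      ring
    rw [he]
    exact hYu.sub hSYi
  -- split the two integrals
  have hsplitX : ∫ ω, u (X ω) ∂π
      = ∫ ω, G (X ω) ∂π + ∑ j ∈ cardS, cvec u j * ∫ ω, X ω j ∂π := by
    have he : (fun ω => u (X ω))
        = (fun ω => G (X ω) + ∑ j ∈ cardS, cvec u j * X ω j) := by
      funext ω; exact hdecomp (X ω)
    rw [he, integral_add hGX hSXi, integral_finset_sum _ (fun j _ => (hXi j).const_mul _)]
    congr 1
    apply Finset.sum_congr rfl
    intro j _
    rw [integral_const_mul]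
  have hsplitY : ∫ ω, u (Y ω) ∂π
      = ∫ ω, G (Y ω) ∂π + ∑ j ∈ cardS, cvec u j * ∫ ω, Y ω j ∂π := by
    have he : (fun ω => u (Y ω))
        = (fun ω => G (Y ω) + ∑ j ∈ cardS, cvec u j * Y ω j) := by
      funext ω; exact hdecomp (Y ω)
    rw [he, integral_add hGY hSYi, integral_finset_sum _ (fun j _ => (hYi j).const_mul _)]
    congr 1
    apply Finset.sum_congr rfl
    intro j _
    rw [integral_const_mul]
  -- cardinal part
  have hcard : ∑ j ∈ cardS, cvec u j * ∫ ω, Y ω j ∂π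
      ≤ ∑ j ∈ cardS, cvec u j * ∫ ω, X ω j ∂π := by
    apply Finset.sum_le_sum
    intro j _
    exact mul_le_mul_of_nonneg_left (hI j) (cvec_nonneg hu j)
  -- ordinal part : ∫ G∘Y ≤ ∫ G∘X
  -- switch to the projected processes
  set X' : Ω → Fin r → ℝ := fun ω => ordProj z (X ω) with hX'
  set Y' : Ω → Fin r → ℝ := fun ω => ordProj z (Y ω) with hY'
  have hGXX' : ∀ ω, G (X' ω) = G (X ω) := by
    intro ω
    simp only [hG, hX']
    congr 1
    funext k
    simp only [ordProj]
    by_cases hk : (k : ℕ) < z <;> simp [hk]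
  have hGYY' : ∀ ω, G (Y' ω) = G (Y ω) := by
    intro ω
    simp only [hG, hY']
    congr 1
    funext k
    simp only [ordProj]
    by_cases hk : (k : ℕ) < z <;> simp [hk]
  set g : Fin r → ℝ → ℝ := fun j t => if (j : ℕ) < z then 0 else t with hg
  have hgmeas : ∀ j, Measurable (g j) := by
    intro j
    by_cases hj : (j : ℕ) < z
    · simp only [hg, if_pos hj]; exact measurable_const
    · simp only [hg, if_neg hj]; exact measurable_id
  have hX'coord : ∀ j, (fun ω => X' ω j) = (g j) ∘ (fun ω => X ω j) := by
    intro j; funext ω; simp [hX', ordProj, hg, Function.comp]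
  have hY'coord : ∀ j, (fun ω => Y' ω j) = (g j) ∘ (fun ω => Y ω j) := by
    intro j; funext ω; simp [hY', ordProj, hg, Function.comp]
  have hX'm : ∀ j, Measurable (fun ω => X' ω j) := by
    intro j; rw [hX'coord j]; exact (hgmeas j).comp (hXm j)
  have hY'm : ∀ j, Measurable (fun ω => Y' ω j) := by
    intro j; rw [hY'coord j]; exact (hgmeas j).comp (hYm j)
  have hX'ind : ProbabilityTheory.iIndepFun
      (fun j ω => X' ω j) π := by
    exact hXind.comp g hgmeas
  have hY'ind : ProbabilityTheory.iIndepFun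
      (fun j ω => Y' ω j) π := by
    exact hYind.comp g hgmeas
  -- laws
  set μ : Fin r → Measure ℝ := fun j => π.map (fun ω => X' ω j) with hμ
  set ν : Fin r → Measure ℝ := fun j => π.map (fun ω => Y' ω j) with hν
  haveI hμp : ∀ j, IsProbabilityMeasure (μ j) := by
    intro j; rw [hμ]; exact Measure.isProbabilityMeasure_map (hX'm j).aemeasurable
  haveI hνp : ∀ j, IsProbabilityMeasure (ν j) := by
    intro j; rw [hν]; exact Measure.isProbabilityMeasure_map (hY'm j).aemeasurable
  have hmapX : π.map (fun ω j => X' ω j) = Measure.pi μ :=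
    map_pi_of_iIndep π (fun j ω => X' ω j) hX'm hX'ind
  have hmapY : π.map (fun ω j => Y' ω j) = Measure.pi ν :=
    map_pi_of_iIndep π (fun j ω => Y' ω j) hY'm hY'ind
  -- the FOSD hypothesis on the laws
  have hFOSD : ∀ i, ∀ φ : ℝ → ℝ, Measurable φ → Monotone φ → (∃ B, ∀ x, |φ x| ≤ B) →
      ∫ t, φ t ∂(ν i) ≤ ∫ t, φ t ∂(μ i) := by
    intro i φ hφm hφmono hφb
    rw [hμ, hν]
    rw [integral_map (hX'm i).aemeasurable hφm.aestronglyMeasurable,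
      integral_map (hY'm i).aemeasurable hφm.aestronglyMeasurable]
    by_cases hi : z ≤ (i : ℕ)
    · have heX : ∀ ω, φ (X' ω i) = φ (X ω i) := by
        intro ω; simp [hX', ordProj, Nat.not_lt.mpr hi]
      have heY : ∀ ω, φ (Y' ω i) = φ (Y ω i) := by
        intro ω; simp [hY', ordProj, Nat.not_lt.mpr hi]
      simp only [heX, heY]
      exact hII i hi φ hφm hφmono hφb
    · have hi' : (i : ℕ) < z := Nat.not_le.mp hi
      have heX : ∀ ω, φ (X' ω i) = φ 0 := by
        intro ω; simp [hX', ordProj, hi']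
      have heY : ∀ ω, φ (Y' ω i) = φ 0 := by
        intro ω; simp [hY', ordProj, hi']
      simp only [heX, heY]
      exact le_rfl
  -- vector laws measurable
  have hXvm : Measurable (fun ω (j : Fin r) => X' ω j) := measurable_pi_iff.mpr hX'm
  have hYvm : Measurable (fun ω (j : Fin r) => Y' ω j) := measurable_pi_iff.mpr hY'm
  -- truncation and limits
  have hord : ∫ ω, G (Y ω) ∂π ≤ ∫ ω, G (X ω) ∂π := by
    -- truncated comparison
    have htrunc : ∀ n : ℕ,
        ∫ ω, max (-(n : ℝ)) (min (n : ℝ) (G (Y' ω))) ∂π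
          ≤ ∫ ω, max (-(n : ℝ)) (min (n : ℝ) (G (X' ω))) ∂π := by
      intro n
      set Gn : (Fin r → ℝ) → ℝ := fun x => max (-(n : ℝ)) (min (n : ℝ) (G x)) with hGn
      have hGnb : ∀ x, |Gn x| ≤ (n : ℝ) := by
        intro x
        rw [abs_le]
        constructor
        · exact le_max_left _ _
        · exact max_le (neg_le_self (Nat.cast_nonneg n)) (min_le_left _ _)
      have hGnmono : Monotone Gn := by
        intro x y hxy
        exact max_le_max le_rfl (min_le_min le_rfl (hGmono hxy))
      have hGnX : AEMeasurable Gn (Measure.pi μ) :=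
        aemeasurable_monotone_pi r Gn n hGnb hGnmono μ hμp
      have hGnY : AEMeasurable Gn (Measure.pi ν) :=
        aemeasurable_monotone_pi r Gn n hGnb hGnmono ν hνp
      have hintX : ∫ ω, Gn (X' ω) ∂π = ∫ x, Gn x ∂(Measure.pi μ) := by
        rw [← hmapX]
        rw [integral_map hXvm.aemeasurable]
        rw [hmapX]
        exact hGnX.aestronglyMeasurable
      have hintY : ∫ ω, Gn (Y' ω) ∂π = ∫ x, Gn x ∂(Measure.pi ν) := by
        rw [← hmapY]
        rw [integral_map hYvm.aemeasurable]
        rw [hmapY]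
        exact hGnY.aestronglyMeasurable
      show ∫ ω, Gn (Y' ω) ∂π ≤ ∫ ω, Gn (X' ω) ∂π
      rw [hintX, hintY]
      exact pi_integral_fosd r Gn n hGnb hGnmono μ ν hμp hνp hFOSD
    -- pass to the limit in the truncation
    have hGX' : Integrable (fun ω => G (X' ω)) π := by
      have he : (fun ω => G (X' ω)) = fun ω => G (X ω) := funext hGXX'
      rw [he]; exact hGX
    have hGY' : Integrable (fun ω => G (Y' ω)) π := by
      have he : (fun ω => G (Y' ω)) = fun ω => G (Y ω) := funext hGYY'
      rw [he]; exact hGY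
    have habs : ∀ (n : ℝ) (x : ℝ), 0 ≤ n → |max (-n) (min n x)| ≤ |x| := by
      intro n x hn
      rw [abs_le]
      constructor
      · refine le_trans ?_ (le_max_right _ _)
        refine le_min (le_trans ?_ hn) (neg_abs_le x)
        simp [abs_nonneg]
      · refine max_le (le_trans ?_ (abs_nonneg x)) (le_trans (min_le_right _ _) (le_abs_self x))
        linarith
    have hclampid : ∀ (n : ℝ) (x : ℝ), |x| ≤ n → max (-n) (min n x) = x := by
      intro n x hx
      obtain ⟨h1, h2⟩ := abs_le.mp hx
      rw [min_eq_right h2, max_eq_right h1]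
    have htendgen : ∀ (Z : Ω → Fin r → ℝ), Integrable (fun ω => G (Z ω)) π →
        Filter.Tendsto (fun n : ℕ => ∫ ω, max (-(n : ℝ)) (min (n : ℝ) (G (Z ω))) ∂π)
          Filter.atTop (nhds (∫ ω, G (Z ω) ∂π)) := by
      intro Z hZ
      apply tendsto_integral_of_dominated_convergence (fun ω => |G (Z ω)|)
      · intro n
        have hc : Continuous (fun t : ℝ => max (-(n : ℝ)) (min (n : ℝ) t)) :=
          continuous_const.max (continuous_const.min continuous_id)
        exact hc.comp_aestronglyMeasurable hZ.aestronglyMeasurable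
      · exact hZ.abs
      · intro n
        filter_upwards with ω
        rw [Real.norm_eq_abs]
        exact habs _ _ (Nat.cast_nonneg n)
      · filter_upwards with ω
        obtain ⟨N, hN⟩ := exists_nat_ge (|G (Z ω)|)
        apply Filter.Tendsto.congr' ?_ (tendsto_const_nhds (x := G (Z ω)))
        rw [Filter.EventuallyEq, Filter.eventually_atTop]
        refine ⟨N, fun n hn => ?_⟩
        rw [hclampid _ _ (le_trans hN (by exact_mod_cast hn))]
    have htendX := htendgen X' hGX'
    have htendY := htendgen Y' hGY'
    have hle : ∫ ω, G (Y' ω) ∂π ≤ ∫ ω, G (X' ω) ∂π :=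
      le_of_tendsto_of_tendsto' htendY htendX htrunc
    calc ∫ ω, G (Y ω) ∂π = ∫ ω, G (Y' ω) ∂π := by
          apply integral_congr_ae
          filter_upwards with ω
          exact (hGYY' ω).symm
      _ ≤ ∫ ω, G (X' ω) ∂π := hle
      _ = ∫ ω, G (X ω) ∂π := by
          apply integral_congr_ae
          filter_upwards with ω
          exact hGXX' ω
  rw [hsplitX, hsplitY]
  exact add_le_add hord hcard

end GSD
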